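/- Let ν > 0, y₀ ∈ ℝ, t ∈ ℝ, and define x(x̂) = x̂ + (1/ν)(1 − tanh(2ν(x̂ + t/(4ν²) − y₀))) for x̂ ∈ ℝ. Then the function x̂ ↦ x(x̂) is not injective on ℝ. In particular its derivative equals 2·tanh²(2ν(x̂ + t/(4ν²) − y₀)) − 1, which is negative at the point where the argument of tanh vanishes and tends to 1 as x̂ → ±∞. -/

import Mathlib

open Real Filter

lemma tanh_exp (x : ℝ) : Real.tanh x = (Real.exp (2*x) - 1) / (Real.exp (2*x) + 1) := by
  rw [Real.tanh_eq_sinh_div_cosh, Real.sinh_eq, Real.cosh_eq]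
  have h1 : Real.exp x > 0 := Real.exp_pos x
  have h2 : Real.exp (-x) > 0 := Real.exp_pos _
  have e2 : Real.exp (2*x) = Real.exp x * Real.exp x := by
    rw [two_mul, Real.exp_add]
  have ei : Real.exp (-x) * Real.exp x = 1 := by rw [← Real.exp_add]; simp
  rw [div_eq_div_iff (by positivity) (by positivity)]
  rw [e2]; ring_nf; nlinarith [ei]

lemma hasDerivAt_tanh' (x : ℝ) : HasDerivAt Real.tanh (1 - Real.tanh x ^ 2) x := by
  have hc : Real.cosh x ≠ 0 := ne_of_gt (Real.cosh_pos x)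
  have h := (Real.hasDerivAt_sinh x).div (Real.hasDerivAt_cosh x) hc
  have heq : (fun y => Real.sinh y / Real.cosh y) = Real.tanh := by
    funext y; rw [Real.tanh_eq_sinh_div_cosh]
  have h : HasDerivAt (fun y => Real.sinh y / Real.cosh y) _ x := h
  rw [heq] at h
  convert h using 1
  rw [Real.tanh_eq_sinh_div_cosh, div_pow]
  have h2 : Real.cosh x ^ 2 ≠ 0 := pow_ne_zero _ hc
  field_simp

lemma tanh_lt_one' (x : ℝ) : Real.tanh x < 1 := by
  rw [tanh_exp]
  rw [div_lt_one (by positivity)]; linarith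

lemma tanh_tendsto_top : Tendsto Real.tanh atTop (nhds 1) := by
  have heq : Real.tanh = fun x => 1 - 2 / (Real.exp (2*x) + 1) := by
    funext x; rw [tanh_exp]
    have h : Real.exp (2*x) + 1 > 0 := by positivity
    field_simp; ring
  rw [heq]
  have h1 : Tendsto (fun x : ℝ => Real.exp (2*x) + 1) atTop atTop :=
    (Real.tendsto_exp_atTop.comp (tendsto_id.const_mul_atTop (by norm_num))).atTop_add tendsto_const_nhds
  have h2 : Tendsto (fun x : ℝ => 2 / (Real.exp (2*x) + 1)) atTop (nhds 0) :=
    tendsto_const_nhds.div_atTop h1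
  have h3 := Filter.Tendsto.sub (tendsto_const_nhds : Tendsto (fun _ : ℝ => (1:ℝ)) atTop (nhds 1)) h2
  simpa using h3

lemma tanh_tendsto_bot : Tendsto Real.tanh atBot (nhds (-1)) := by
  have hb : Tendsto (fun x : ℝ => 2*x) atBot atBot := by
    exact tendsto_id.const_mul_atBot (by norm_num)
  have h0 : Tendsto (fun x : ℝ => Real.exp (2*x)) atBot (nhds 0) :=
    Real.tendsto_exp_atBot.comp hb
  have h := (h0.sub (tendsto_const_nhds (α:=ℝ) (x:=(1:ℝ)))).div
    (h0.add (tendsto_const_nhds (α:=ℝ) (x:=(1:ℝ)))) (by norm_num)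
  have heq : Real.tanh = fun x => (Real.exp (2*x) - 1)/(Real.exp (2*x) + 1) := funext tanh_exp
  rw [heq]; norm_num at h; exact h

lemma tanh_one_gt_half : Real.tanh 1 > 1/2 := by
  rw [tanh_exp]
  have he : Real.exp (2*1) > 3 := by
    have h1 : Real.exp 1 > 1.8 := by
      have := Real.exp_one_gt_d9; nlinarith
    have h2 : Real.exp (2*1) = Real.exp 1 * Real.exp 1 := by rw [two_mul, Real.exp_add]
    nlinarith
  norm_num at he ⊢
  rw [lt_div_iff₀ (by positivity)]; linarith



/-- The phase `φ(x̂,t) = 2ν(x̂ + t/(4ν²) − y₀)` of the one-soliton. -/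
noncomputable def solPhi (ν y₀ xh t : ℝ) : ℝ := 2 * ν * (xh + t / (4 * ν ^ 2) - y₀)

/-- The parametrized spatial variable `x(x̂,t) = x̂ + (1/ν)(1 − tanh φ)`. -/
noncomputable def solX (ν y₀ xh t : ℝ) : ℝ :=
  xh + (1 / ν) * (1 - Real.tanh (solPhi ν y₀ xh t))

/-- The map `x̂ ↦ x(x̂) = x̂ + (1/ν)(1 − tanh(2ν(x̂ + t/(4ν²) − y₀)))` is not injective;
its derivative is `2 tanh²(2ν(x̂ + t/(4ν²) − y₀)) − 1`, which is negative at the point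
where the argument of `tanh` vanishes and tends to `1` as `x̂ → ±∞`. -/
theorem one_soliton_loop (ν y₀ t : ℝ) (hν : 0 < ν) :
    ¬ Function.Injective (fun xh => solX ν y₀ xh t) ∧
    (∀ xh : ℝ, deriv (fun y => solX ν y₀ y t) xh
      = 2 * Real.tanh (2 * ν * (xh + t / (4 * ν ^ 2) - y₀)) ^ 2 - 1) ∧
    deriv (fun y => solX ν y₀ y t) (y₀ - t / (4 * ν ^ 2)) < 0 ∧
    Filter.Tendsto (fun xh => deriv (fun y => solX ν y₀ y t) xh) Filter.atTop (nhds 1) ∧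
    Filter.Tendsto (fun xh => deriv (fun y => solX ν y₀ y t) xh) Filter.atBot (nhds 1) := by
  have hν' : ν ≠ 0 := ne_of_gt hν
  -- derivative
  have hφ : ∀ y : ℝ, HasDerivAt (fun y => solPhi ν y₀ y t) (2*ν) y := by
    intro y
    have h := (((hasDerivAt_id y).add_const (t / (4 * ν ^ 2))).sub_const y₀).const_mul (2*ν)
    simpa [solPhi] using h
  have hf : ∀ y : ℝ, HasDerivAt (fun y => solX ν y₀ y t)
      (2 * Real.tanh (solPhi ν y₀ y t) ^ 2 - 1) y := by
    intro y
    have h1 := (hasDerivAt_tanh' (solPhi ν y₀ y t)).comp y (hφ y)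
    have h2 := ((hasDerivAt_const y (1:ℝ)).sub h1).const_mul (1/ν)
    have h3 := (hasDerivAt_id y).add h2
    have heq : (fun y => id y + 1/ν * (1 - (Real.tanh ∘ fun y => solPhi ν y₀ y t) y))
        = fun y => solX ν y₀ y t := by
      funext z; simp [solX, Function.comp]
    have h3 : HasDerivAt (fun y => id y + 1/ν * (1 - (Real.tanh ∘ fun y => solPhi ν y₀ y t) y)) _ y := h3
    rw [heq] at h3
    convert h3 using 1
    field_simp; ring
  have hderiv : ∀ xh : ℝ, deriv (fun y => solX ν y₀ y t) xh
      = 2 * Real.tanh (2 * ν * (xh + t / (4 * ν ^ 2) - y₀)) ^ 2 - 1 := fun xh => (hf xh).deriv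
  refine ⟨?_, hderiv, ?_, ?_, ?_⟩
  · -- non-injectivity
    intro hinj
    set a := y₀ - t / (4 * ν ^ 2) with ha
    set b := a + 1/(2*ν) with hb
    set c := a + 2/ν with hc
    have hφa : solPhi ν y₀ a t = 0 := by simp [solPhi, ha]
    have hφb : solPhi ν y₀ b t = 1 := by
      simp only [solPhi, hb, ha]; field_simp; ring
    have fa : solX ν y₀ a t = a + 1/ν := by
      simp [solX, hφa, Real.tanh_zero]
    have fba : solX ν y₀ b t < solX ν y₀ a t := by
      rw [fa]
      simp only [solX, hφb]
      have h2 : 1/(2*ν) = (1/ν) * (1/2) := by field_simp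
      have h3 : (0:ℝ) < 1/ν := by positivity
      nlinarith [tanh_one_gt_half]
    have fca : solX ν y₀ a t < solX ν y₀ c t := by
      rw [fa]
      simp only [solX, hc]
      have h1 : Real.tanh (solPhi ν y₀ (a + 2/ν) t) < 1 := tanh_lt_one' _
      have h2 : (1/ν) * (1 - Real.tanh (solPhi ν y₀ (a + 2/ν) t)) ≥ 0 := by
        apply mul_nonneg (by positivity); linarith
      have h3 : 1/ν < 2/ν := by
        rw [div_lt_div_iff₀ hν hν]; nlinarith
      linarith
    have hbc : b ≤ c := by
      simp only [hb, hc]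
      have : 1/(2*ν) ≤ 2/ν := by
        rw [div_le_div_iff₀ (by positivity) hν]; nlinarith
      linarith
    have hcont : ContinuousOn (fun y => solX ν y₀ y t) (Set.Icc b c) :=
      (fun y _ => ((hf y).differentiableAt.continuousAt).continuousWithinAt)
    have hmem : solX ν y₀ a t ∈ Set.Icc (solX ν y₀ b t) (solX ν y₀ c t) :=
      ⟨le_of_lt fba, le_of_lt fca⟩
    obtain ⟨x, hx, hfx⟩ := intermediate_value_Icc hbc hcont hmem
    have hxa : x ≠ a := by
      have : a < b := by
        simp only [hb]; have : 0 < 1/(2*ν) := by positivity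
        linarith
      intro h; rw [h] at hx; exact absurd hx.1 (by linarith)
    exact hxa (hinj hfx)
  · -- derivative negative at the critical point
    rw [hderiv]
    have h0 : 2 * ν * ((y₀ - t / (4 * ν ^ 2)) + t / (4 * ν ^ 2) - y₀) = 0 := by ring
    rw [h0, Real.tanh_zero]
    norm_num
  · -- limit at atTop
    have hg : Tendsto (fun xh : ℝ => 2 * ν * (xh + t / (4 * ν ^ 2) - y₀)) atTop atTop := by
      apply Tendsto.const_mul_atTop (by positivity : (0:ℝ) < 2*ν)
      simpa [add_sub_assoc] using tendsto_atTop_add_const_right atTop (t / (4 * ν ^ 2) - y₀)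
        (tendsto_id (α := ℝ) (x := atTop))
    have h1 : Tendsto (fun xh : ℝ => Real.tanh (2 * ν * (xh + t / (4 * ν ^ 2) - y₀)))
        atTop (nhds 1) := tanh_tendsto_top.comp hg
    have h2 := ((h1.pow 2).const_mul 2).sub_const 1
    norm_num at h2
    exact h2.congr (fun xh => (hderiv xh).symm)
  · -- limit at atBot
    have hg : Tendsto (fun xh : ℝ => 2 * ν * (xh + t / (4 * ν ^ 2) - y₀)) atBot atBot := by
      apply Tendsto.const_mul_atBot (by positivity : (0:ℝ) < 2*ν)
      simpa [add_sub_assoc] using tendsto_atBot_add_const_right atBot (t / (4 * ν ^ 2) - y₀)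
        (tendsto_id (α := ℝ) (x := atBot))
    have h1 : Tendsto (fun xh : ℝ => Real.tanh (2 * ν * (xh + t / (4 * ν ^ 2) - y₀)))
        atBot (nhds (-1)) := tanh_tendsto_bot.comp hg
    have h2 := ((h1.pow 2).const_mul 2).sub_const 1
    norm_num at h2
    exact h2.congr (fun xh => (hderiv xh).symm)
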